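/- Let E and F be diagonal m×m idempotents, and let P(E) denote the set of idempotents [[1_k, B],[0, E]] in M (i.e. with B·E = 0). Then the setwise product P(E)·P(F) equals P(E·F), where E·F is the diagonal idempotent with (EF)_{ii} = E_{ii}·F_{ii}. -/
import Mathlib


open Pointwise

/-- For diagonal idempotents `E = diagonal e` and `F = diagonal f`,
the setwise product `P(E) * P(F)` of the corresponding sets of block idempotents
`[[1, B],[0, D]]` (with `B * D = 0`) equals `P(E * F)`. -/
theorem stmt10 (k m : ℕ) (e f : Fin m → ℂ)
    (he : ∀ i, e i = 0 ∨ e i = 1) (hf : ∀ i, f i = 0 ∨ f i = 1) :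
    ({X | ∃ B : Matrix (Fin k) (Fin m) ℂ, B * Matrix.diagonal e = 0 ∧
        X = Matrix.fromBlocks 1 B 0 (Matrix.diagonal e)} :
      Set (Matrix (Fin k ⊕ Fin m) (Fin k ⊕ Fin m) ℂ)) *
    {X | ∃ B : Matrix (Fin k) (Fin m) ℂ, B * Matrix.diagonal f = 0 ∧
        X = Matrix.fromBlocks 1 B 0 (Matrix.diagonal f)} =
    {X | ∃ B : Matrix (Fin k) (Fin m) ℂ, B * Matrix.diagonal (fun i => e i * f i) = 0 ∧
        X = Matrix.fromBlocks 1 B 0 (Matrix.diagonal (fun i => e i * f i))} := by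
  have hff : (fun i => f i * f i) = f := by
    funext i; rcases hf i with h | h <;> simp [h]
  have hEF : Matrix.diagonal e * Matrix.diagonal f
      = Matrix.diagonal (fun i => e i * f i) := by
    simp [Matrix.diagonal_mul_diagonal]
  have hFE : Matrix.diagonal f * Matrix.diagonal e
      = Matrix.diagonal (fun i => e i * f i) := by
    simp [Matrix.diagonal_mul_diagonal, mul_comm]
  have hF2 : Matrix.diagonal f * Matrix.diagonal f = Matrix.diagonal f := by
    rw [Matrix.diagonal_mul_diagonal, hff]
  ext X
  simp only [Set.mem_mul, Set.mem_setOf_eq]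
  constructor
  · rintro ⟨_, ⟨B, hB, rfl⟩, _, ⟨C, hC, rfl⟩, rfl⟩
    refine ⟨C + B * Matrix.diagonal f, ?_, ?_⟩
    · rw [Matrix.add_mul, ← hEF, ← Matrix.mul_assoc, ← Matrix.mul_assoc]
      have h1 : C * Matrix.diagonal e * Matrix.diagonal f
          = C * Matrix.diagonal f * Matrix.diagonal e := by
        rw [Matrix.mul_assoc, Matrix.mul_assoc, hEF, hFE]
      rw [h1, hC, Matrix.zero_mul, Matrix.mul_assoc B, hFE, ← hEF,
        ← Matrix.mul_assoc B, hB, Matrix.zero_mul, Matrix.zero_mul, zero_add]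
    · rw [Matrix.fromBlocks_multiply]
      simp [hEF]
  · rintro ⟨B, hB, rfl⟩
    refine ⟨Matrix.fromBlocks 1 (B * Matrix.diagonal f) 0 (Matrix.diagonal e),
      ⟨B * Matrix.diagonal f, by rw [Matrix.mul_assoc, hFE, hB], rfl⟩,
      Matrix.fromBlocks 1 (B - B * Matrix.diagonal f) 0 (Matrix.diagonal f),
      ⟨B - B * Matrix.diagonal f, by rw [Matrix.sub_mul, Matrix.mul_assoc, hF2, sub_self], rfl⟩, ?_⟩
    rw [Matrix.fromBlocks_multiply]
    simp only [hEF, Matrix.mul_one, Matrix.one_mul, Matrix.mul_zero,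
      Matrix.zero_mul, add_zero, zero_add, Matrix.zero_mul, zero_mul]
    rw [Matrix.mul_assoc, hF2]
    have h2 : B - B * Matrix.diagonal f + B * Matrix.diagonal f = B := by abel
    rw [h2]
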